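/- Let w ∈ ℝ² be a unit vector, ξ₀ ∈ ℝ², C₀, C > 0, and let (ε_ħ)_{ħ∈(0,1]} be positive numbers with ε_ħ ħ^{−3/2} → 0 and ε_ħ ħ^{−2} → ∞ as ħ → 0⁺. Then ħ Σ_{m ∈ ℤ², |⟨m − ξ₀/ħ, w⟩| ≤ C₀ ħ^{−2} ε_ħ} (1 + ‖ħ^{1/2}(m − ξ₀/ħ)‖²)^{−2} → 0 as ħ → 0⁺. -/

import Mathlib

open MeasureTheory Filter Real
open scoped Topology ENNReal NNReal

noncomputable section

/-- The Euclidean inner product on `ℝ²`. -/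
def dot2 (v w : ℝ × ℝ) : ℝ := v.1 * w.1 + v.2 * w.2

/-- The Euclidean norm on `ℝ²`. -/
def nrm2 (v : ℝ × ℝ) : ℝ := Real.sqrt (dot2 v v)

/-- The canonical embedding `ℤ² ↪ ℝ²`. -/
def toR2 (m : ℤ × ℤ) : ℝ × ℝ := ((m.1 : ℝ), (m.2 : ℝ))

/-- Rotation of an integer vector by `+π/2`. -/
def perpZ (v : ℤ × ℤ) : ℤ × ℤ := (-v.2, v.1)

/-- `v` generates a primitive rank-1 sublattice `Λ = ℤ v` of `ℤ²`. -/
def Primitive (v : ℤ × ℤ) : Prop := Int.gcd v.1 v.2 = 1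

/-- `L_Λ = ‖v_Λ‖`. -/
def LL (v : ℤ × ℤ) : ℝ := nrm2 (toR2 v)

/-- `H_Λ(ξ) = ⟨ξ, v_Λ⟩ / L_Λ`, where `v` is the generator `v_Λ` of `Λ`. -/
def HH (v : ℤ × ℤ) (ξ : ℝ × ℝ) : ℝ := dot2 ξ (toR2 v) / LL v

/-- Integral over a fundamental domain of the torus `𝕋² = ℝ²/ℤ²`. -/
def torusInt (f : ℝ × ℝ → ℂ) : ℂ :=
  ∫ x in Set.Icc ((0, 0) : ℝ × ℝ) ((1, 1) : ℝ × ℝ), f x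

/-- `e^{it}`. -/
def expI (t : ℝ) : ℂ := Complex.exp (Complex.I * (t : ℂ))

/-! ### Auxiliary lemmas for Statement 13 -/

lemma stmt13_tailterm (hb x : ℝ) (h0 : 0 < hb) (hx : 2 ≤ x) :
    ((1 + hb * x^2)^2)⁻¹ ≤ hb⁻¹^2 * ((x-1)⁻¹^3 - x⁻¹^3) / 3 := by
  have hx1 : (0:ℝ) < x - 1 := by linarith
  have hx0 : (0:ℝ) < x := by linarith
  have h2 : ((1 + hb * x^2)^2)⁻¹ ≤ ((hb * x^2)^2)⁻¹ := by
    apply inv_anti₀ (by positivity)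
    nlinarith [sq_nonneg (hb*x^2)]
  refine h2.trans ?_
  have key : ((hb * x^2)^2)⁻¹ = hb⁻¹^2 * (x^2)⁻¹^2 := by field_simp
  rw [key, div_eq_mul_inv]
  have h3 : (x^2)⁻¹^2 ≤ ((x-1)⁻¹^3 - x⁻¹^3) * 3⁻¹ := by
    have e1 : ((x-1)⁻¹^3 - x⁻¹^3) * 3⁻¹ = (x^3 - (x-1)^3) / (3*((x-1)^3 * x^3)) := by
      field_simp
    have e2 : (x^2)⁻¹^2 = 1 / x^4 := by
      field_simp
    rw [e1, e2, div_le_div_iff₀ (by positivity) (by positivity)]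
    nlinarith [pow_pos hx0 3, sq_nonneg (3*x-2)]
  calc hb⁻¹^2 * (x^2)⁻¹^2 ≤ hb⁻¹^2 * (((x-1)⁻¹^3 - x⁻¹^3) * 3⁻¹) :=
        mul_le_mul_of_nonneg_left h3 (by positivity)
    _ = hb⁻¹^2 * ((x-1)⁻¹^3 - x⁻¹^3) * 3⁻¹ := by ring

lemma stmt13_sumN (hb : ℝ) (h0 : 0 < hb) (h1 : hb ≤ 1) (M : ℕ) :
    ∑ n ∈ Finset.range M, ((1 + hb * (n:ℝ)^2)^2)⁻¹ ≤ 4 / Real.sqrt hb := by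
  set s := Real.sqrt hb with hs_def
  have hs : 0 < s := Real.sqrt_pos.2 h0
  have hs1 : s ≤ 1 := by
    rw [hs_def, show (1:ℝ) = Real.sqrt 1 by simp]
    exact Real.sqrt_le_sqrt h1
  have hsq : s^2 = hb := Real.sq_sqrt h0.le
  have hsinv : 1 ≤ s⁻¹ := by
    have h := mul_inv_cancel₀ (ne_of_gt hs)
    have : 0 < s⁻¹ := by positivity
    nlinarith
  set N : ℕ := ⌊s⁻¹⌋₊ + 2 with hN_def
  have hN2 : 2 ≤ N := le_add_self
  have hNreal : (N:ℝ) ≤ s⁻¹ + 2 := by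
    push_cast [hN_def]
    have := Nat.floor_le (le_of_lt (by positivity : (0:ℝ) < s⁻¹))
    linarith
  have hN1 : s⁻¹ ≤ (N:ℝ) - 1 := by
    push_cast [hN_def]
    have := Nat.lt_floor_add_one s⁻¹
    linarith
  have hterm_nonneg : ∀ n : ℕ, 0 ≤ ((1 + hb * (n:ℝ)^2)^2)⁻¹ := fun n => by positivity
  set M' := max M N with hM'_def
  have hNM' : N ≤ M' := le_max_right _ _
  have step0 : ∑ n ∈ Finset.range M, ((1 + hb * (n:ℝ)^2)^2)⁻¹
      ≤ ∑ n ∈ Finset.range M', ((1 + hb * (n:ℝ)^2)^2)⁻¹ :=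
    Finset.sum_le_sum_of_subset_of_nonneg
      (Finset.range_subset_range.2 (le_max_left _ _)) (fun n _ _ => hterm_nonneg n)
  have hsplit : ∑ n ∈ Finset.range M', ((1 + hb * (n:ℝ)^2)^2)⁻¹
      = ∑ n ∈ Finset.Ico 0 N, ((1 + hb * (n:ℝ)^2)^2)⁻¹
        + ∑ n ∈ Finset.Ico N M', ((1 + hb * (n:ℝ)^2)^2)⁻¹ := by
    rw [Finset.range_eq_Ico, ← Finset.sum_Ico_consecutive _ (Nat.zero_le N) hNM']
  have head : ∑ n ∈ Finset.Ico 0 N, ((1 + hb * (n:ℝ)^2)^2)⁻¹ ≤ (N:ℝ) := by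
    calc ∑ n ∈ Finset.Ico 0 N, ((1 + hb * (n:ℝ)^2)^2)⁻¹
        ≤ ∑ n ∈ Finset.Ico 0 N, (1:ℝ) := by
          apply Finset.sum_le_sum
          intro n _
          have h01 : (0:ℝ) ≤ hb * (n:ℝ)^2 := by positivity
          exact inv_le_one_of_one_le₀ (by nlinarith)
      _ = (N:ℝ) := by simp
  set G : ℕ → ℝ := fun n => (((n:ℝ) - 1)⁻¹)^3 with hG_def
  set c : ℝ := hb⁻¹^2 / 3 with hc_def
  have tail : ∑ n ∈ Finset.Ico N M', ((1 + hb * (n:ℝ)^2)^2)⁻¹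
      ≤ c * G N := by
    have bd : ∀ n ∈ Finset.Ico N M', ((1 + hb * (n:ℝ)^2)^2)⁻¹
        ≤ c * (G n - G (n+1)) := by
      intro n hn
      have hn2 : 2 ≤ n := le_trans hN2 (Finset.mem_Ico.1 hn).1
      have hx : (2:ℝ) ≤ (n:ℝ) := by exact_mod_cast hn2
      have ht := stmt13_tailterm hb (n:ℝ) h0 hx
      have eg : G n - G (n+1) = ((n:ℝ)-1)⁻¹^3 - ((n:ℝ))⁻¹^3 := by
        simp only [hG_def]
        push_cast
        rw [show ((n:ℝ)+1-1) = (n:ℝ) from by ring]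
      rw [eg, hc_def]
      calc ((1 + hb * (n:ℝ)^2)^2)⁻¹ ≤ hb⁻¹^2 * (((n:ℝ)-1)⁻¹^3 - ((n:ℝ))⁻¹^3) / 3 := ht
        _ = hb⁻¹^2/3 * (((n:ℝ)-1)⁻¹^3 - ((n:ℝ))⁻¹^3) := by ring
    have tele : ∑ n ∈ Finset.Ico N M', (G n - G (n+1)) = G N - G M' := by
      rw [Finset.sum_Ico_eq_sum_range]
      simpa [Nat.add_sub_cancel' hNM', ← add_assoc] using
        Finset.sum_range_sub' (fun j => G (N + j)) (M' - N)
    have hGM' : 0 ≤ G M' := by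
      simp only [hG_def]
      have h2M : (2:ℝ) ≤ (M':ℝ) := by exact_mod_cast le_trans hN2 hNM'
      have : (0:ℝ) ≤ ((M':ℝ) - 1) := by linarith
      positivity
    have hc0 : 0 ≤ c := by rw [hc_def]; positivity
    calc ∑ n ∈ Finset.Ico N M', ((1 + hb * (n:ℝ)^2)^2)⁻¹
        ≤ ∑ n ∈ Finset.Ico N M', c * (G n - G (n+1)) := Finset.sum_le_sum bd
      _ = c * (G N - G M') := by rw [← Finset.mul_sum, tele]
      _ ≤ c * G N := by nlinarith
  have hGN : G N ≤ s^3 := by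
    simp only [hG_def]
    have h1' : (0:ℝ) < s⁻¹ := by positivity
    have hle : ((N:ℝ) - 1)⁻¹ ≤ s := by
      rw [show s = (s⁻¹)⁻¹ by simp]
      exact inv_anti₀ h1' hN1
    have hNpos : (0:ℝ) < (N:ℝ) - 1 := lt_of_lt_of_le h1' hN1
    have hpos : 0 ≤ ((N:ℝ) - 1)⁻¹ := by positivity
    exact pow_le_pow_left₀ hpos hle 3
  have hfinal : c * G N ≤ s⁻¹ / 3 := by
    have e : hb⁻¹^2 = (s⁻¹)^4 := by rw [← hsq]; field_simp
    have hGN0 : 0 ≤ G N := by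
      simp only [hG_def]
      have hNpos : (0:ℝ) < (N:ℝ) - 1 := lt_of_lt_of_le (by positivity) hN1
      positivity
    have : c * G N ≤ c * s^3 := mul_le_mul_of_nonneg_left hGN (by rw [hc_def]; positivity)
    refine this.trans ?_
    rw [hc_def, e]
    rw [show (s⁻¹)^4/3 * s^3 = s⁻¹ * (s⁻¹*s)^3 / 3 from by ring, inv_mul_cancel₀ (ne_of_gt hs)]
    norm_num
  rw [hsplit] at step0
  rw [div_eq_mul_inv]
  linarith

lemma stmt13_tsumN (hb : ℝ) (h0 : 0 < hb) (h1 : hb ≤ 1) :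
    ∑' n : ℕ, ENNReal.ofReal ((1 + hb * (n:ℝ)^2)^2)⁻¹ ≤ ENNReal.ofReal (4 / Real.sqrt hb) := by
  rw [ENNReal.tsum_eq_iSup_sum]
  apply iSup_le
  intro t
  obtain ⟨n, hn⟩ := Finset.exists_nat_subset_range t
  calc ∑ i ∈ t, ENNReal.ofReal ((1 + hb * (i:ℝ)^2)^2)⁻¹
      = ENNReal.ofReal (∑ i ∈ t, ((1 + hb * (i:ℝ)^2)^2)⁻¹) :=
        (ENNReal.ofReal_sum_of_nonneg (fun i _ => by positivity)).symm
    _ ≤ ENNReal.ofReal (∑ i ∈ Finset.range n, ((1 + hb * (i:ℝ)^2)^2)⁻¹) :=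
        ENNReal.ofReal_le_ofReal
          (Finset.sum_le_sum_of_subset_of_nonneg hn (fun i _ _ => by positivity))
    _ ≤ ENNReal.ofReal (4 / Real.sqrt hb) :=
        ENNReal.ofReal_le_ofReal (stmt13_sumN hb h0 h1 n)

/-- distance from the unit cell `[k, k+1)` to `0`. -/
def stmt13_bR (k : ℤ) : ℝ := if 0 ≤ k then (k:ℝ) else -(k:ℝ)-1

def stmt13_eZ : ℕ × Bool ≃ ℤ where
  toFun p := if p.2 then -(p.1:ℤ)-1 else (p.1:ℤ)
  invFun k := (if 0 ≤ k then k.toNat else (-k-1).toNat, decide (k < 0))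
  left_inv := by
    rintro ⟨n, b⟩
    cases b <;> simp <;> omega
  right_inv := by
    intro k
    by_cases h : 0 ≤ k
    · simp [h, not_lt.2 h]
    · simp [h, lt_of_not_ge h]

lemma stmt13_tsumZ (hb : ℝ) (h0 : 0 < hb) (h1 : hb ≤ 1) :
    ∑' k : ℤ, ENNReal.ofReal ((1 + hb * (stmt13_bR k)^2)^2)⁻¹
      ≤ ENNReal.ofReal (8 / Real.sqrt hb) := by
  have key : ∀ p : ℕ × Bool, ENNReal.ofReal ((1 + hb * (stmt13_bR (stmt13_eZ p))^2)^2)⁻¹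
      = ENNReal.ofReal ((1 + hb * ((p.1:ℝ))^2)^2)⁻¹ := by
    rintro ⟨n, b⟩
    cases b
    · simp [stmt13_eZ, stmt13_bR]
    · have h1' : ¬ (0:ℤ) ≤ -(n:ℤ)-1 := by omega
      simp only [stmt13_eZ, Equiv.coe_fn_mk, if_true, stmt13_bR, h1', if_false]
      push_cast
      norm_num
  rw [← Equiv.tsum_eq stmt13_eZ (fun k => ENNReal.ofReal ((1 + hb * (stmt13_bR k)^2)^2)⁻¹)]
  calc ∑' p : ℕ × Bool, ENNReal.ofReal ((1 + hb * (stmt13_bR (stmt13_eZ p))^2)^2)⁻¹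
      = ∑' p : ℕ × Bool, ENNReal.ofReal ((1 + hb * ((p.1:ℝ))^2)^2)⁻¹ := tsum_congr key
    _ = ∑' n : ℕ, ∑' b : Bool, ENNReal.ofReal ((1 + hb * ((n:ℝ))^2)^2)⁻¹ :=
        ENNReal.tsum_prod'
    _ = ∑' n : ℕ, (ENNReal.ofReal ((1 + hb * ((n:ℝ))^2)^2)⁻¹
          + ENNReal.ofReal ((1 + hb * ((n:ℝ))^2)^2)⁻¹) := by
        refine tsum_congr fun n => ?_
        rw [tsum_bool]
    _ = (∑' n : ℕ, ENNReal.ofReal ((1 + hb * ((n:ℝ))^2)^2)⁻¹)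
          + ∑' n : ℕ, ENNReal.ofReal ((1 + hb * ((n:ℝ))^2)^2)⁻¹ := ENNReal.tsum_add
    _ ≤ ENNReal.ofReal (4 / Real.sqrt hb) + ENNReal.ofReal (4 / Real.sqrt hb) :=
        add_le_add (stmt13_tsumN hb h0 h1) (stmt13_tsumN hb h0 h1)
    _ = ENNReal.ofReal (8 / Real.sqrt hb) := by
        rw [← ENNReal.ofReal_add (by positivity) (by positivity)]
        ring_nf

lemma stmt13_tsumJ (T : ℝ) (hT : 0 ≤ T) :
    ∑' j : ℤ, (if -T-1 ≤ (j:ℝ) ∧ (j:ℝ) ≤ T then (1:ℝ≥0∞) else 0)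
      ≤ ENNReal.ofReal (2*T+3) := by
  classical
  rw [ENNReal.tsum_eq_iSup_sum]
  apply iSup_le
  intro t
  rw [Finset.sum_boole]
  have hsub : t.filter (fun j : ℤ => -T-1 ≤ (j:ℝ) ∧ (j:ℝ) ≤ T)
      ⊆ Finset.Icc ⌈-T-1⌉ ⌊T⌋ := by
    intro j hj
    rw [Finset.mem_filter] at hj
    rw [Finset.mem_Icc]
    exact ⟨Int.ceil_le.2 hj.2.1, Int.le_floor.2 hj.2.2⟩
  have hcard : (t.filter (fun j : ℤ => -T-1 ≤ (j:ℝ) ∧ (j:ℝ) ≤ T)).card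
      ≤ (Finset.Icc ⌈-T-1⌉ ⌊T⌋).card := Finset.card_le_card hsub
  have hcard2 : ((Finset.Icc ⌈-T-1⌉ ⌊T⌋).card : ℝ) ≤ 2*T+3 := by
    rw [Int.card_Icc]
    set x : ℤ := ⌊T⌋ + 1 - ⌈-T-1⌉ with hx
    rcases le_or_gt x 0 with h | h
    · rw [Int.toNat_of_nonpos h]
      norm_num; linarith
    · have e : ((x.toNat : ℕ) : ℝ) = (x : ℝ) := by
        rw [← Int.cast_natCast, Int.toNat_of_nonneg h.le]
      rw [e]
      have h1 : (⌊T⌋ : ℝ) ≤ T := Int.floor_le T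
      have h2 : (-T-1 : ℝ) ≤ (⌈-T-1⌉ : ℝ) := Int.le_ceil _
      push_cast [hx]
      linarith
  calc ((t.filter (fun j : ℤ => -T-1 ≤ (j:ℝ) ∧ (j:ℝ) ≤ T)).card : ℝ≥0∞)
      ≤ ((Finset.Icc ⌈-T-1⌉ ⌊T⌋).card : ℝ≥0∞) := by exact_mod_cast Nat.cast_le.2 hcard
    _ = ENNReal.ofReal (((Finset.Icc ⌈-T-1⌉ ⌊T⌋).card : ℝ)) := by
        rw [ENNReal.ofReal_natCast]
    _ ≤ ENNReal.ofReal (2*T+3) := ENNReal.ofReal_le_ofReal hcard2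


lemma stmt13_bR_sq_le (u : ℝ) : stmt13_bR ⌊u⌋ ^ 2 ≤ u ^ 2 := by
  simp only [stmt13_bR]
  split
  · rename_i hk
    have h1' : (⌊u⌋:ℝ) ≤ u := Int.floor_le _
    have h0' : (0:ℝ) ≤ (⌊u⌋:ℝ) := by exact_mod_cast hk
    nlinarith
  · rename_i hk
    have h2' : u < (⌊u⌋:ℝ) + 1 := Int.lt_floor_add_one _
    have h0' : ⌊u⌋ ≤ -1 := by omega
    have h0'' : ((⌊u⌋:ℤ):ℝ) + 1 ≤ 0 := by
      have : ((⌊u⌋:ℤ):ℝ) ≤ -1 := by exact_mod_cast h0'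
      linarith
    nlinarith

lemma stmt13_nrm2_sq (hb : ℝ) (h0 : 0 ≤ hb) (v : ℝ × ℝ) :
    nrm2 (Real.sqrt hb • v) ^ 2 = hb * (v.1^2 + v.2^2) := by
  simp only [nrm2]
  rw [Real.sq_sqrt]
  · simp only [dot2, Prod.smul_fst, Prod.smul_snd, smul_eq_mul]
    have hss : Real.sqrt hb * Real.sqrt hb = hb := Real.mul_self_sqrt h0
    nlinarith [hss]
  · simp only [dot2, Prod.smul_fst, Prod.smul_snd, smul_eq_mul]
    nlinarith [sq_nonneg (Real.sqrt hb * v.1), sq_nonneg (Real.sqrt hb * v.2)]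

lemma stmt13_rot (w y : ℝ × ℝ) (hw : w.1^2 + w.2^2 = 1) :
    (dot2 y w)^2 + (dot2 y ((-w.2, w.1) : ℝ × ℝ))^2 = y.1^2 + y.2^2 := by
  simp only [dot2]
  nlinarith [hw]

lemma stmt13_floor_diff {a b : ℝ} (h : ⌊a⌋ = ⌊b⌋) : (a - b)^2 < 1 := by
  have h1 := Int.floor_le a; have h2 := Int.lt_floor_add_one a
  have h3 := Int.floor_le b; have h4 := Int.lt_floor_add_one b
  rw [h] at h1 h2
  nlinarith

lemma stmt13_key (w : ℝ × ℝ) (hw : w.1^2 + w.2^2 = 1) (cen : ℝ × ℝ)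
    (hb T : ℝ) (h0 : 0 < hb) (h1 : hb ≤ 1) (hT : 0 ≤ T) :
    ∑' m : ℤ × ℤ,
      (if |dot2 (toR2 m - cen) w| ≤ T then
        ((1 + nrm2 (Real.sqrt hb • (toR2 m - cen)) ^ 2) ^ 2)⁻¹ else 0)
      ≤ (2*T+3) * (16 / Real.sqrt hb) := by
  classical
  set F : ℤ × ℤ → ℝ := fun m =>
    if |dot2 (toR2 m - cen) w| ≤ T then
      ((1 + nrm2 (Real.sqrt hb • (toR2 m - cen)) ^ 2) ^ 2)⁻¹ else 0 with hF_def
  have hF0 : ∀ m, 0 ≤ F m := by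
    intro m
    simp only [hF_def]
    split
    · positivity
    · exact le_rfl
  set sf : ℤ × ℤ → ℝ := fun m => dot2 (toR2 m - cen) w with hsf
  set uf : ℤ × ℤ → ℝ := fun m => dot2 (toR2 m - cen) ((-w.2, w.1) : ℝ × ℝ) with huf
  set φ : ℤ × ℤ → (ℤ × ℤ) × ℤ := fun m => ((⌊sf m⌋, ⌊uf m⌋), (m.1 + m.2) % 2) with hφ
  -- the rotated coordinates
  have hsu : ∀ m m' : ℤ × ℤ,
      (sf m - sf m')^2 + (uf m - uf m')^2
        = ((m.1 - m'.1 : ℤ):ℝ)^2 + ((m.2 - m'.2 : ℤ):ℝ)^2 := by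
    intro m m'
    have := stmt13_rot w (toR2 m - toR2 m') hw
    have e1 : sf m - sf m' = dot2 (toR2 m - toR2 m') w := by
      simp only [hsf, dot2, toR2, Prod.fst_sub, Prod.snd_sub]; ring
    have e2 : uf m - uf m' = dot2 (toR2 m - toR2 m') ((-w.2, w.1) : ℝ × ℝ) := by
      simp only [huf, dot2, toR2, Prod.fst_sub, Prod.snd_sub]; ring
    rw [e1, e2, this]
    simp only [toR2, Prod.fst_sub, Prod.snd_sub]
    push_cast
    ring
  have hinj : Function.Injective φ := by
    intro m m' h
    simp only [hφ, Prod.mk.injEq] at h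
    obtain ⟨⟨hs, hu⟩, hp⟩ := h
    have hs' := stmt13_floor_diff hs
    have hu' := stmt13_floor_diff hu
    have hsum : ((m.1 - m'.1 : ℤ):ℝ)^2 + ((m.2 - m'.2 : ℤ):ℝ)^2 < 2 := by
      rw [← hsu m m']; linarith
    have hsumZ : (m.1 - m'.1)^2 + (m.2 - m'.2)^2 < 2 := by exact_mod_cast hsum
    set a : ℤ := m.1 - m'.1 with ha
    set b : ℤ := m.2 - m'.2 with hb'
    have hsum1 : a^2 + b^2 ≤ 1 := by
      have := Int.lt_add_one_iff.mp (by linarith : a^2 + b^2 < 1 + 1)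
      exact this
    have hpar : (a + b) % 2 = 0 := by omega
    have ha1 : -1 ≤ a ∧ a ≤ 1 := ⟨by nlinarith [sq_nonneg b], by nlinarith [sq_nonneg b]⟩
    have hb1 : -1 ≤ b ∧ b ≤ 1 := ⟨by nlinarith [sq_nonneg a], by nlinarith [sq_nonneg a]⟩
    have hz : a = 0 ∧ b = 0 := by
      obtain ⟨hal, har⟩ := ha1; obtain ⟨hbl, hbr⟩ := hb1
      rcases (show a = -1 ∨ a = 0 ∨ a = 1 by omega) with ha'|ha'|ha' <;>
        rcases (show b = -1 ∨ b = 0 ∨ b = 1 by omega) with hb''|hb''|hb'' <;>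
        rw [ha', hb''] at hsum1 hpar <;> norm_num at hsum1 <;> norm_num at hpar <;> exact ⟨ha', hb''⟩
    have h1' : m.1 = m'.1 := by omega
    have h2' : m.2 = m'.2 := by omega
    exact Prod.ext h1' h2'
  set A : ℤ → ℝ≥0∞ := fun j => if -T-1 ≤ (j:ℝ) ∧ (j:ℝ) ≤ T then 1 else 0 with hA
  set B : ℤ → ℝ≥0∞ := fun k => ENNReal.ofReal ((1 + hb * (stmt13_bR k)^2)^2)⁻¹ with hB
  set Cc : ℤ → ℝ≥0∞ := fun r => if r = 0 ∨ r = 1 then 1 else 0 with hCc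
  set G : (ℤ × ℤ) × ℤ → ℝ≥0∞ := fun q => A q.1.1 * B q.1.2 * Cc q.2 with hG
  have hpt : ∀ m, ENNReal.ofReal (F m) ≤ G (φ m) := by
    intro m
    by_cases hm : |sf m| ≤ T
    · have hAm : A ⌊sf m⌋ = 1 := by
        simp only [hA]
        rw [if_pos]
        have h1' := Int.floor_le (sf m)
        have h2' := Int.lt_floor_add_one (sf m)
        have := abs_le.1 hm
        exact ⟨by linarith [this.1], by linarith [this.2]⟩
      have hCm : Cc ((m.1 + m.2) % 2) = 1 := by
        simp only [hCc]
        rw [if_pos]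
        omega
      have hGm : G (φ m) = B ⌊uf m⌋ := by
        simp only [hG, hφ]
        rw [hAm, hCm, one_mul, mul_one]
      rw [hGm]
      -- compute the norm
      have hnn : nrm2 (Real.sqrt hb • (toR2 m - cen)) ^ 2
          = hb * ((sf m)^2 + (uf m)^2) := by
        rw [stmt13_nrm2_sq hb h0.le]
        have := stmt13_rot w (toR2 m - cen) hw
        rw [hsf, huf, this]
      have hFm : F m = ((1 + hb * ((sf m)^2 + (uf m)^2))^2)⁻¹ := by
        simp only [hF_def]
        rw [if_pos hm, hnn]
      have hbr : (stmt13_bR ⌊uf m⌋)^2 ≤ (uf m)^2 := stmt13_bR_sq_le (uf m)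
      rw [hFm, hB]
      apply ENNReal.ofReal_le_ofReal
      apply inv_anti₀ (by positivity)
      apply pow_le_pow_left₀ (by positivity)
      nlinarith [sq_nonneg (sf m)]
    · have : F m = 0 := by
        simp only [hF_def]
        rw [if_neg hm]
      rw [this]
      simp
  have hENN : ∑' m : ℤ × ℤ, ENNReal.ofReal (F m)
      ≤ ENNReal.ofReal ((2*T+3) * (16 / Real.sqrt hb)) := by
    calc ∑' m : ℤ × ℤ, ENNReal.ofReal (F m)
        ≤ ∑' m : ℤ × ℤ, G (φ m) := ENNReal.tsum_le_tsum hpt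
      _ ≤ ∑' q : (ℤ × ℤ) × ℤ, G q := ENNReal.tsum_comp_le_tsum_of_injective hinj G
      _ = (∑' p : ℤ × ℤ, A p.1 * B p.2) * (∑' r : ℤ, Cc r) := by
          rw [ENNReal.tsum_prod']
          calc ∑' (p : ℤ × ℤ), ∑' (r : ℤ), G (p, r)
              = ∑' (p : ℤ × ℤ), ((A p.1 * B p.2) * ∑' r : ℤ, Cc r) := by
                refine tsum_congr fun p => ?_
                rw [← ENNReal.tsum_mul_left]
            _ = _ := ENNReal.tsum_mul_right
      _ = ((∑' j : ℤ, A j) * (∑' k : ℤ, B k)) * (∑' r : ℤ, Cc r) := by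
          congr 1
          rw [ENNReal.tsum_prod']
          calc ∑' (j : ℤ), ∑' (k : ℤ), A j * B k
              = ∑' (j : ℤ), (A j * ∑' k : ℤ, B k) := by
                refine tsum_congr fun j => ?_
                rw [← ENNReal.tsum_mul_left]
            _ = _ := ENNReal.tsum_mul_right
      _ ≤ (ENNReal.ofReal (2*T+3) * ENNReal.ofReal (8 / Real.sqrt hb)) * 2 := by
          have hCr : ∑' r : ℤ, Cc r = 2 := by
            rw [tsum_eq_sum (s := ({0, 1} : Finset ℤ)) ?_]
            · rw [Finset.sum_insert (by norm_num), Finset.sum_singleton]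
              simp only [hCc]
              norm_num
            · intro r hr
              simp only [hCc]
              rw [if_neg]
              simp only [Finset.mem_insert, Finset.mem_singleton] at hr
              tauto
          rw [hCr]
          exact mul_le_mul' (mul_le_mul' (stmt13_tsumJ T hT) (stmt13_tsumZ hb h0 h1)) le_rfl
      _ = ENNReal.ofReal ((2*T+3) * (16 / Real.sqrt hb)) := by
          rw [← ENNReal.ofReal_mul (by linarith)]
          rw [show (2:ℝ≥0∞) = ENNReal.ofReal 2 by norm_num]
          rw [← ENNReal.ofReal_mul (by positivity)]
          congr 1
          ring
  have heq : ∑' m : ℤ × ℤ, F m = (∑' m : ℤ × ℤ, ENNReal.ofReal (F m)).toReal := by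
    rw [ENNReal.tsum_toReal_eq (fun m => ENNReal.ofReal_ne_top)]
    exact tsum_congr fun m => (ENNReal.toReal_ofReal (hF0 m)).symm
  rw [heq]
  have hR0 : 0 ≤ (2*T+3) * (16 / Real.sqrt hb) := by
    apply mul_nonneg (by linarith) (by positivity)
  calc (∑' m : ℤ × ℤ, ENNReal.ofReal (F m)).toReal
      ≤ (ENNReal.ofReal ((2*T+3) * (16 / Real.sqrt hb))).toReal :=
        ENNReal.toReal_mono ENNReal.ofReal_ne_top hENN
    _ = (2*T+3) * (16 / Real.sqrt hb) := ENNReal.toReal_ofReal hR0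

/-- vanishing of the rescaled lattice sum over the strip
`|⟨m - ξ₀/hb, w⟩| ≤ C₀ hb⁻² ε_hb` in the regime `hb² ≪ ε_hb ≪ hb^{3/2}`. -/
theorem stmt13
    (w : ℝ × ℝ) (hw : nrm2 w = 1) (ξ₀ : ℝ × ℝ)
    (C₀ C : ℝ) (hC₀ : 0 < C₀) (hC : 0 < C)
    (ε : ℝ → ℝ) (hεpos : ∀ hb ∈ Set.Ioc (0:ℝ) 1, 0 < ε hb)
    (hε32 : Tendsto (fun hb => ε hb / hb ^ ((3:ℝ)/2)) (𝓝[>] (0:ℝ)) (𝓝 0))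
    (hε2 : Tendsto (fun hb => ε hb / hb ^ 2) (𝓝[>] (0:ℝ)) atTop) :
    Tendsto
      (fun hb => hb * ∑' m : ℤ × ℤ,
        if |dot2 (toR2 m - hb⁻¹ • ξ₀) w| ≤ C₀ * ε hb / hb ^ 2 then
          ((1 + nrm2 (Real.sqrt hb • (toR2 m - hb⁻¹ • ξ₀)) ^ 2) ^ 2)⁻¹ else 0)
      (𝓝[>] (0:ℝ)) (𝓝 0) := by
  have hw' : w.1^2 + w.2^2 = 1 := by
    have hd0 : 0 ≤ dot2 w w := by simp only [dot2]; nlinarith [sq_nonneg w.1, sq_nonneg w.2]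
    have : dot2 w w = 1 := by
      have := Real.sq_sqrt hd0
      simp only [nrm2] at hw
      rw [hw] at this
      linarith [this]
    simp only [dot2] at this
    nlinarith
  have hIoo : Set.Ioo (0:ℝ) 1 ∈ 𝓝[>] (0:ℝ) :=
    Ioo_mem_nhdsGT_of_mem (by constructor <;> norm_num)
  apply tendsto_of_tendsto_of_tendsto_of_le_of_le'
    (g := fun _ => (0:ℝ))
    (h := fun hb => 32*C₀*(ε hb / hb ^ ((3:ℝ)/2)) + 48 * Real.sqrt hb)
    tendsto_const_nhds
  · -- upper bound tends to 0
    have hsqrt0 : Tendsto (fun hb : ℝ => Real.sqrt hb) (𝓝[>] (0:ℝ)) (𝓝 0) := by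
      have h := (Real.continuous_sqrt.tendsto 0).mono_left (nhdsWithin_le_nhds (s := Set.Ioi 0))
      simpa using h
    have := (hε32.const_mul (32*C₀)).add (hsqrt0.const_mul 48)
    simpa using this
  · -- lower bound
    filter_upwards [self_mem_nhdsWithin] with hb hhb
    have h0 : 0 < hb := hhb
    apply mul_nonneg h0.le
    apply tsum_nonneg
    intro m
    split
    · positivity
    · exact le_rfl
  · -- upper bound
    filter_upwards [hIoo] with hb hhb
    have h0 : 0 < hb := hhb.1
    have h1 : hb ≤ 1 := hhb.2.le
    have hε := hεpos hb ⟨h0, h1⟩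
    set T : ℝ := C₀ * ε hb / hb ^ 2 with hT_def
    have hT : 0 ≤ T := by positivity
    have hk := stmt13_key w hw' (hb⁻¹ • ξ₀) hb T h0 h1 hT
    have hs : 0 < Real.sqrt hb := Real.sqrt_pos.2 h0
    have hss : Real.sqrt hb * Real.sqrt hb = hb := Real.mul_self_sqrt h0.le
    have h32 : hb ^ ((3:ℝ)/2) = hb * Real.sqrt hb := by
      rw [show (3:ℝ)/2 = 1 + 1/2 by norm_num, Real.rpow_add h0, Real.rpow_one,
        ← Real.sqrt_eq_rpow]
    have step1 : hb * ∑' m : ℤ × ℤ,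
          (if |dot2 (toR2 m - hb⁻¹ • ξ₀) w| ≤ T then
            ((1 + nrm2 (Real.sqrt hb • (toR2 m - hb⁻¹ • ξ₀)) ^ 2) ^ 2)⁻¹ else 0)
        ≤ hb * ((2*T+3) * (16 / Real.sqrt hb)) :=
      mul_le_mul_of_nonneg_left hk h0.le
    have step2 : hb * ((2*T+3) * (16 / Real.sqrt hb))
        = 32*C₀*(ε hb / hb ^ ((3:ℝ)/2)) + 48 * Real.sqrt hb := by
      rw [h32, hT_def]
      set s := Real.sqrt hb with hsd
      rw [show hb = s*s from hss.symm]
      have hs0 : s ≠ 0 := ne_of_gt hs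
      field_simp
      ring
    exact le_trans step1 (le_of_eq step2)
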